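/- Let θ1, θ2 > 0 with θ1 ≠ θ2, and X ~ Poisson(θ1). Then P( X·log(θ2/θ1) ≥ θ2 − θ1 ) ≤ exp(−(√θ1 − √θ2)²/2). -/

import Mathlib

open MeasureTheory Real

lemma real_exp_tsum (x : ℝ) : (∑' n : ℕ, x ^ n / n.factorial) = Real.exp x := by
  rw [Real.exp_eq_exp_ℝ, NormedSpace.exp_eq_tsum_div]

/-- Chernoff bound for the Poisson likelihood-ratio test: for `X ~ Poisson(θ1)` with
`θ1 ≠ θ2`, `P(X log(θ2/θ1) ≥ θ2 - θ1) ≤ exp(-(√θ1 - √θ2)²/2)`. -/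
theorem poisson_single_loglik_tail_bound
    {Ω : Type*} [MeasurableSpace Ω] (μ : Measure Ω) [IsProbabilityMeasure μ]
    (θ1 θ2 : ℝ) (h1 : 0 < θ1) (h2 : 0 < θ2) (hne : θ1 ≠ θ2)
    (X : Ω → ℕ)
    (hX : ∀ k : ℕ, μ {a | X a = k}
        = ENNReal.ofReal (Real.exp (-θ1) * θ1 ^ k / (Nat.factorial k))) :
    (μ {a | (X a : ℝ) * Real.log (θ2 / θ1) ≥ θ2 - θ1}).toReal
      ≤ Real.exp (-(Real.sqrt θ1 - Real.sqrt θ2) ^ 2 / 2) := by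
  set c : ℝ := Real.log (θ2 / θ1) with hc
  set b : ℝ := θ2 - θ1 with hb
  set r : ℝ := Real.sqrt (θ1 * θ2) with hr
  set g : ℕ → ℝ := fun k =>
    Real.exp (-b / 2) * Real.exp (-θ1) * (r ^ k / k.factorial) with hg
  have hrnn : (0:ℝ) ≤ r := Real.sqrt_nonneg _
  have hgnn : ∀ k, 0 ≤ g k := by
    intro k
    have : (0:ℝ) ≤ r ^ k := pow_nonneg hrnn k
    rw [hg]
    positivity
  -- exp(c/2) = sqrt(θ2/θ1)
  have hec : Real.exp (c / 2) = Real.sqrt (θ2 / θ1) := by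
    rw [Real.sqrt_eq_rpow, Real.rpow_def_of_pos (by positivity), hc]
    ring_nf
  -- θ1 * sqrt(θ2/θ1) = r
  have hθr : θ1 * Real.sqrt (θ2 / θ1) = r := by
    have h : θ1 * Real.sqrt (θ2 / θ1) = Real.sqrt (θ1 ^ 2 * (θ2 / θ1)) := by
      rw [Real.sqrt_mul (by positivity), Real.sqrt_sq h1.le]
    rw [h, hr]
    congr 1
    field_simp
  -- covering the event by a countable union
  have hsub : {a | (X a : ℝ) * c ≥ b} ⊆ ⋃ k : ℕ, {a | X a = k ∧ (k : ℝ) * c ≥ b} := by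
    intro a ha
    exact Set.mem_iUnion.2 ⟨X a, rfl, ha⟩
  -- per-term bound
  have hterm : ∀ k : ℕ, μ {a | X a = k ∧ (k : ℝ) * c ≥ b} ≤ ENNReal.ofReal (g k) := by
    intro k
    by_cases hk : (k : ℝ) * c ≥ b
    · have hset : {a | X a = k ∧ (k : ℝ) * c ≥ b} = {a | X a = k} := by
        ext a; simp [hk]
      rw [hset, hX k]
      apply ENNReal.ofReal_le_ofReal
      have hgk : g k = (Real.exp (-b / 2) * Real.exp ((k : ℝ) * (c / 2)))
          * (Real.exp (-θ1) * θ1 ^ k / k.factorial) := by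
        simp only [hg]
        rw [← hθr, mul_pow, ← hec, ← Real.exp_nat_mul]
        ring
      have h1le : (1:ℝ) ≤ Real.exp (-b / 2) * Real.exp ((k : ℝ) * (c / 2)) := by
        rw [← Real.exp_add]
        apply Real.one_le_exp
        nlinarith [hk]
      have hp : (0:ℝ) ≤ Real.exp (-θ1) * θ1 ^ k / k.factorial := by positivity
      rw [hgk]
      exact le_mul_of_one_le_left hp h1le
    · have hset : {a | X a = k ∧ (k : ℝ) * c ≥ b} = (∅ : Set Ω) := by
        ext a; simp [hk]
      rw [hset, measure_empty]
      exact zero_le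
  have hchain : μ {a | (X a : ℝ) * c ≥ b} ≤ ∑' k : ℕ, ENNReal.ofReal (g k) :=
    (measure_mono hsub).trans ((measure_iUnion_le _).trans (ENNReal.tsum_le_tsum hterm))
  have hsum : Summable g := by
    rw [hg]
    exact (Real.summable_pow_div_factorial r).mul_left _
  have htsum : ∑' k, g k = Real.exp (-b / 2) * Real.exp (-θ1) * Real.exp r := by
    rw [hg, tsum_mul_left, real_exp_tsum]
  have hofreal : (∑' k : ℕ, ENNReal.ofReal (g k)) = ENNReal.ofReal (∑' k, g k) :=
    (ENNReal.ofReal_tsum_of_nonneg hgnn hsum).symm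
  have hfin : Real.exp (-b / 2) * Real.exp (-θ1) * Real.exp r
      = Real.exp (-(Real.sqrt θ1 - Real.sqrt θ2) ^ 2 / 2) := by
    rw [← Real.exp_add, ← Real.exp_add]
    congr 1
    have e1 := Real.sq_sqrt h1.le
    have e2 := Real.sq_sqrt h2.le
    rw [hr, Real.sqrt_mul h1.le, hb]
    ring_nf
    nlinarith [e1, e2]
  have hfinal : μ {a | (X a : ℝ) * c ≥ b}
      ≤ ENNReal.ofReal (Real.exp (-(Real.sqrt θ1 - Real.sqrt θ2) ^ 2 / 2)) := by
    rw [← hfin, ← htsum, ← hofreal]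
    exact hchain
  exact ENNReal.toReal_le_of_le_ofReal (Real.exp_nonneg _) hfinal
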